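/- In a single sketch with hash function h into w buckets, the expected estimate of an edge weight satisfies E[count(h(j),h(k))] ≤ f_e(j,k) + n/w², where n is the total weight of edges (l,m) with l ≠ j and m ≠ k, provided h is pairwise independent. -/

import Mathlib

open MeasureTheory Finset

/-- Single-sketch expected edge estimate: if every edge in the support of the
stream either equals `(j,k)` or differs from it in both coordinates, then
`E[count(h j, h k)] ≤ f(j,k) + n/w²`, where `n` is the total weight of edges
differing from `(j,k)` in both coordinates. -/
theorem stmt_13 {Ω V : Type*} [MeasurableSpace Ω] (μ : Measure Ω) [IsProbabilityMeasure μ]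
    [Fintype V] [DecidableEq V]
    (w : ℕ) (hw : 0 < w) (h : Ω → V → Fin w) (j k : V)
    (pairwise_indep : ∀ l m : V, l ≠ j → m ≠ k →
      μ {ω | h ω l = h ω j ∧ h ω m = h ω k} ≤ 1 / (w : ENNReal) ^ 2)
    (f : V × V → ℝ) (hf : ∀ e, 0 ≤ f e)
    (hsupp : ∀ l m : V, f (l, m) ≠ 0 → (l, m) = (j, k) ∨ (l ≠ j ∧ m ≠ k))
    (n : ℝ)
    (hn : n = ∑ e ∈ Finset.univ.filter (fun e : V × V => e.1 ≠ j ∧ e.2 ≠ k), f e) :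
    (∫ ω, (∑ e ∈ Finset.univ.filter
        (fun e : V × V => h ω e.1 = h ω j ∧ h ω e.2 = h ω k), f e) ∂μ)
      ≤ f (j, k) + n / (w : ℝ) ^ 2 := by
  classical
  set T : Finset (V × V) := Finset.univ.filter (fun e : V × V => e.1 ≠ j ∧ e.2 ≠ k) with hT
  set A : V × V → Set Ω := fun e => {ω | h ω e.1 = h ω j ∧ h ω e.2 = h ω k} with hA
  set B : V × V → Set Ω := fun e => toMeasurable μ (A e) with hB
  have hBmeas : ∀ e, MeasurableSet (B e) := fun e => measurableSet_toMeasurable μ (A e)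
  have hBμ : ∀ e ∈ T, μ (B e) ≤ 1 / (w : ENNReal) ^ 2 := by
    intro e he
    rw [hB]
    rw [measure_toMeasurable]
    rw [hT] at he
    simp only [Finset.mem_filter, Finset.mem_univ, true_and] at he
    exact pairwise_indep e.1 e.2 he.1 he.2
  set F : Ω → ℝ := fun ω => ∑ e ∈ Finset.univ.filter
      (fun e : V × V => h ω e.1 = h ω j ∧ h ω e.2 = h ω k), f e with hF
  set F' : Ω → ℝ := fun ω =>
    f (j, k) + ∑ e ∈ T, f e * (B e).indicator (fun _ => (1 : ℝ)) ω with hF'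
  have hn0 : 0 ≤ n := by
    rw [hn]; exact Finset.sum_nonneg fun e _ => hf e
  have hw2 : (0 : ℝ) < (w : ℝ) ^ 2 := by positivity
  -- pointwise bound
  have hle : ∀ ω, F ω ≤ F' ω := by
    intro ω
    have hjk : (j, k) ∈ Finset.univ.filter
        (fun e : V × V => h ω e.1 = h ω j ∧ h ω e.2 = h ω k) := by
      simp
    simp only [hF, hF']
    set S : Finset (V × V) := Finset.univ.filter
      (fun e : V × V => h ω e.1 = h ω j ∧ h ω e.2 = h ω k) with hS
    rw [← Finset.add_sum_erase _ f (by rw [hS] at hjk ⊢; exact hjk)]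
    refine add_le_add le_rfl ?_
    have hsub : (S.erase (j, k)).filter
        (fun e => f e ≠ 0) ⊆ T.filter (fun e => ω ∈ B e) := by
      intro e he
      simp only [hS, Finset.mem_filter, Finset.mem_erase, Finset.mem_univ, true_and] at he
      obtain ⟨⟨hne, hcol⟩, hfe⟩ := he
      have := hsupp e.1 e.2 (by simpa using hfe)
      rcases this with heq | ⟨h1, h2⟩
      · exact absurd (by simpa using heq) hne
      · simp only [Finset.mem_filter, Finset.mem_univ, true_and, hT]
        refine ⟨⟨h1, h2⟩, ?_⟩
        exact subset_toMeasurable μ (A e) hcol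
    calc ∑ e ∈ (S.erase (j, k)), f e
        = ∑ e ∈ ((S.erase (j, k)).filter
        (fun e => f e ≠ 0)), f e := (Finset.sum_filter_ne_zero _).symm
      _ ≤ ∑ e ∈ (T.filter (fun e => ω ∈ B e)), f e :=
          Finset.sum_le_sum_of_subset_of_nonneg hsub (fun e _ _ => hf e)
      _ = ∑ e ∈ T, f e * (B e).indicator (fun _ => (1 : ℝ)) ω := by
          rw [Finset.sum_filter]
          refine Finset.sum_congr rfl fun e _ => ?_
          by_cases hω : ω ∈ B e <;> simp [Set.indicator, hω]
  -- integrability of F'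
  have hint' : Integrable F' μ := by
    rw [hF']
    refine (integrable_const _).add ?_
    refine integrable_finset_sum _ fun e _ => ?_
    exact ((integrable_const (1 : ℝ)).indicator (hBmeas e)).const_mul (f e)
  -- integral of F'
  have hintF' : ∫ ω, F' ω ∂μ = f (j, k) + ∑ e ∈ T, f e * (μ (B e)).toReal := by
    rw [hF']
    rw [integral_add (integrable_const _)
      (integrable_finset_sum _ fun e _ =>
        ((integrable_const (1 : ℝ)).indicator (hBmeas e)).const_mul (f e))]
    rw [integral_const, probReal_univ, one_smul]
    congr 1
    rw [integral_finset_sum _ fun e _ =>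
      ((integrable_const (1 : ℝ)).indicator (hBmeas e)).const_mul (f e)]
    refine Finset.sum_congr rfl fun e _ => ?_
    rw [integral_const_mul, integral_indicator_const _ (hBmeas e)]
    simp [mul_comm, Measure.real]
  have hbound : ∑ e ∈ T, f e * (μ (B e)).toReal ≤ n / (w : ℝ) ^ 2 := by
    have : ∀ e ∈ T, f e * (μ (B e)).toReal ≤ f e * (1 / (w : ℝ) ^ 2) := by
      intro e he
      refine mul_le_mul_of_nonneg_left ?_ (hf e)
      have h1 : (μ (B e)).toReal ≤ (1 / (w : ENNReal) ^ 2).toReal := by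
        refine ENNReal.toReal_mono ?_ (hBμ e he)
        simp [ENNReal.div_eq_top, hw.ne']
      refine h1.trans_eq ?_
      rw [ENNReal.toReal_div, ENNReal.toReal_pow]
      simp
    calc ∑ e ∈ T, f e * (μ (B e)).toReal ≤ ∑ e ∈ T, f e * (1 / (w : ℝ) ^ 2) :=
        Finset.sum_le_sum this
      _ = n / (w : ℝ) ^ 2 := by rw [← Finset.sum_mul, ← hn]; ring
  by_cases hint : Integrable F μ
  · show (∫ ω, F ω ∂μ) ≤ _
    calc ∫ ω, F ω ∂μ ≤ ∫ ω, F' ω ∂μ := integral_mono hint hint' hle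
      _ = f (j, k) + ∑ e ∈ T, f e * (μ (B e)).toReal := hintF'
      _ ≤ f (j, k) + n / (w : ℝ) ^ 2 := add_le_add le_rfl hbound
  · show (∫ ω, F ω ∂μ) ≤ _
    rw [integral_undef hint]
    have : 0 ≤ n / (w : ℝ) ^ 2 := div_nonneg hn0 hw2.le
    linarith [hf (j, k)]
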